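/- Let 1 ≤ p ≤ ∞, let L = L_p(X) for a measure space X, and let I₁,…,I_n ∈ B(L) be pairwise disjoint proper isometries (isometries whose images are L_p(X'_k) for pairwise almost-disjoint measurable X'_k ⊆ X). For a_k ∈ B(L) define I_k^⋆ := I_k^{-1} P_{X'_k}. Then ‖Σ_{k=1}^n a_k I_k^⋆‖ ≤ (Σ_{k=1}^n ‖a_k‖^q)^{1/q}, where q is the conjugate exponent of p (with the conventions q = ∞ for p = 1 and q = 1 for p = ∞). -/

import Mathlib

open MeasureTheory
open scoped ENNReal

/-- For pairwise disjoint proper isometries `I_k` on `L_p(X)` with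
coisometries `I_k^⋆ = I_k⁻¹ P_{A_k}`, one has `‖Σ a_k I_k^⋆‖ ≤ (Σ ‖a_k‖^q)^{1/q}` where
`q` is conjugate to `p` (with the max convention for `q = ∞`). -/
theorem sum_coisometries_holder_estimate
    (X : Type*) [MeasurableSpace X] (μ : Measure X)
    (p q : ℝ≥0∞) [Fact (1 ≤ p)] (hpq : 1 / p + 1 / q = 1)
    -- the indicator-multiplication projections on L_p(X)
    (P : Set X → (Lp ℂ p μ →L[ℂ] Lp ℂ p μ))
    (hP : ∀ (s : Set X) (f : Lp ℂ p μ), (P s f : X → ℂ) =ᵐ[μ] s.indicator f)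
    (n : ℕ) (I Istar : Fin n → (Lp ℂ p μ →L[ℂ] Lp ℂ p μ))
    (A : Fin n → Set X) (hA : ∀ k, MeasurableSet (A k))
    (hdisj : ∀ i j, i ≠ j → μ (A i ∩ A j) = 0)
    -- each `I_k` is a proper isometry with image `L_p(A_k)`
    (hIiso : ∀ k f, ‖I k f‖ = ‖f‖)
    (hIrange : ∀ k f, P (A k) (I k f) = I k f)
    (hIonto : ∀ k g, P (A k) g = g → ∃ f, I k f = g)
    -- `Istar k` is the coisometry `I_k⁻¹ P_{A_k}`
    (hIstar_inv : ∀ k f, Istar k (I k f) = f)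
    (hIstar_proj : ∀ k f, Istar k (P (A k) f) = Istar k f)
    (a : Fin n → (Lp ℂ p μ →L[ℂ] Lp ℂ p μ)) :
    (q = ∞ → ∀ C : ℝ, 0 ≤ C → (∀ k, ‖a k‖ ≤ C) →
      ‖∑ k, (a k).comp (Istar k)‖ ≤ C) ∧
    (q ≠ ∞ →
      ‖∑ k, (a k).comp (Istar k)‖ ≤ (∑ k, ‖a k‖ ^ q.toReal) ^ (1 / q.toReal)) := by
  have hp1 : 1 ≤ p := Fact.out
  have hp0 : p ≠ 0 := by
    intro h; rw [h] at hp1; exact (by simp at hp1 : False)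
  -- P is idempotent
  have hPP : ∀ (s : Set X) (f : Lp ℂ p μ), P s (P s f) = P s f := by
    intro s f
    apply Lp.ext
    filter_upwards [hP s (P s f), hP s f] with x h1 h2
    rw [h1, h2]
    by_cases hx : x ∈ s <;> simp [Set.indicator_apply, hx, h2]
  -- norm of Istar
  have hIstar_norm : ∀ k (g : Lp ℂ p μ), ‖Istar k g‖ = ‖P (A k) g‖ := by
    intro k g
    obtain ⟨f, hf⟩ := hIonto k (P (A k) g) (hPP _ _)
    calc ‖Istar k g‖ = ‖Istar k (P (A k) g)‖ := by rw [hIstar_proj]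
      _ = ‖Istar k (I k f)‖ := by rw [hf]
      _ = ‖f‖ := by rw [hIstar_inv]
      _ = ‖I k f‖ := (hIiso k f).symm
      _ = ‖P (A k) g‖ := by rw [hf]
  -- P is a contraction
  have hP_le : ∀ (s : Set X) (f : Lp ℂ p μ), ‖P s f‖ ≤ ‖f‖ := by
    intro s f
    rw [Lp.norm_def, Lp.norm_def]
    refine ENNReal.toReal_mono (Lp.eLpNorm_ne_top f) ?_
    rw [eLpNorm_congr_ae (hP s f)]
    exact eLpNorm_indicator_le _
  -- the key ℓ^p estimate for the projections, for finite p
  have hkey : p ≠ ∞ → ∀ f : Lp ℂ p μ,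
      ∑ k, ‖P (A k) f‖ ^ p.toReal ≤ ‖f‖ ^ p.toReal := by
    intro hptop f
    set r := p.toReal with hr_def
    have hr : 0 < r := ENNReal.toReal_pos hp0 hptop
    set S : Fin n → ℝ≥0∞ := fun k => ∫⁻ x in A k, (‖f x‖₊ : ℝ≥0∞) ^ r ∂μ with hS
    set Stot : ℝ≥0∞ := ∫⁻ x, (‖f x‖₊ : ℝ≥0∞) ^ r ∂μ with hStot
    have hnorm : eLpNorm (f : X → ℂ) p μ = Stot ^ (1 / r) :=
      eLpNorm_eq_lintegral_rpow_enorm_toReal hp0 hptop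
    have hStot_fin : Stot ≠ ∞ := by
      intro h
      have := Lp.eLpNorm_ne_top f
      rw [hnorm, h, ENNReal.top_rpow_of_pos (by positivity)] at this
      exact this rfl
    -- eLpNorm of the projection
    have heP : ∀ k, eLpNorm (P (A k) f : X → ℂ) p μ = (S k) ^ (1 / r) := by
      intro k
      rw [eLpNorm_congr_ae (hP (A k) f),
        eLpNorm_eq_lintegral_rpow_enorm_toReal hp0 hptop]
      simp only [hS, ← hr_def]
      congr 1
      rw [← lintegral_indicator (hA k)]
      refine lintegral_congr fun x => ?_
      by_cases hx : x ∈ A k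
      · simp [Set.indicator_of_mem hx, enorm_eq_nnnorm]
      · simp [Set.indicator_of_notMem hx, ENNReal.zero_rpow_of_pos hr]
    have hsum_le : ∑ k, S k ≤ Stot := by
      have hAE : Pairwise (Function.onFun (MeasureTheory.AEDisjoint μ) A) := fun i j hij => hdisj i j hij
      have := lintegral_iUnion₀ (fun k => (hA k).nullMeasurableSet) hAE
        (fun x => (‖f x‖₊ : ℝ≥0∞) ^ r)
      calc ∑ k, S k = ∑' k, S k := (tsum_fintype _).symm
        _ = ∫⁻ x in ⋃ k, A k, (‖f x‖₊ : ℝ≥0∞) ^ r ∂μ := this.symm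
        _ ≤ Stot := setLIntegral_le_lintegral _ _
    have hSk_fin : ∀ k, S k ≠ ∞ := by
      intro k
      refine ne_top_of_le_ne_top hStot_fin (setLIntegral_le_lintegral _ _)
    have hNk : ∀ k, ‖P (A k) f‖ ^ r = (S k).toReal := by
      intro k
      rw [Lp.norm_def, heP k, ← ENNReal.toReal_rpow,
        ← Real.rpow_mul ENNReal.toReal_nonneg, one_div, inv_mul_cancel₀ hr.ne',
        Real.rpow_one]
    have hNf : ‖f‖ ^ r = Stot.toReal := by
      rw [Lp.norm_def, hnorm, ← ENNReal.toReal_rpow,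
        ← Real.rpow_mul ENNReal.toReal_nonneg, one_div, inv_mul_cancel₀ hr.ne',
        Real.rpow_one]
    calc ∑ k, ‖P (A k) f‖ ^ r = ∑ k, (S k).toReal := by
          exact Finset.sum_congr rfl fun k _ => hNk k
      _ = (∑ k, S k).toReal := (ENNReal.toReal_sum fun k _ => hSk_fin k).symm
      _ ≤ Stot.toReal := ENNReal.toReal_mono hStot_fin hsum_le
      _ = ‖f‖ ^ r := hNf.symm
  -- pointwise bound on the operator applied to f
  have hptw : ∀ f : Lp ℂ p μ,
      ‖(∑ k, (a k).comp (Istar k)) f‖ ≤ ∑ k, ‖a k‖ * ‖P (A k) f‖ := by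
    intro f
    rw [ContinuousLinearMap.sum_apply]
    refine (norm_sum_le _ _).trans (Finset.sum_le_sum fun k _ => ?_)
    calc ‖(a k).comp (Istar k) f‖ = ‖a k (Istar k f)‖ := rfl
      _ ≤ ‖a k‖ * ‖Istar k f‖ := (a k).le_opNorm _
      _ = ‖a k‖ * ‖P (A k) f‖ := by rw [hIstar_norm]
  constructor
  · -- Case q = ∞, hence p = 1
    intro hq C hC0 hCa
    have hp_eq : p = 1 := by
      rw [hq] at hpq
      simp only [ENNReal.div_top, add_zero] at hpq
      rw [one_div, ENNReal.inv_eq_one] at hpq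
      exact hpq
    have hptop : p ≠ ∞ := by rw [hp_eq]; simp
    have hr1 : p.toReal = 1 := by rw [hp_eq]; simp
    refine ContinuousLinearMap.opNorm_le_bound _ hC0 fun f => ?_
    refine (hptw f).trans ?_
    have hk := hkey hptop f
    rw [hr1] at hk
    simp only [Real.rpow_one] at hk
    calc ∑ k, ‖a k‖ * ‖P (A k) f‖ ≤ ∑ k, C * ‖P (A k) f‖ :=
          Finset.sum_le_sum fun k _ => mul_le_mul_of_nonneg_right (hCa k) (norm_nonneg _)
      _ = C * ∑ k, ‖P (A k) f‖ := by rw [Finset.mul_sum]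
      _ ≤ C * ‖f‖ := mul_le_mul_of_nonneg_left hk hC0
  · -- Case q ≠ ∞
    intro hq
    by_cases hptop : p = ∞
    · -- then q = 1
      have hq1 : q = 1 := by
        rw [hptop] at hpq
        simp only [ENNReal.div_top, zero_add] at hpq
        rw [one_div, ENNReal.inv_eq_one] at hpq
        exact hpq
      have hqr : q.toReal = 1 := by rw [hq1]; simp
      rw [hqr]
      simp only [Real.rpow_one, one_div, inv_one]
      refine ContinuousLinearMap.opNorm_le_bound _
        (Finset.sum_nonneg fun k _ => norm_nonneg _) fun f => ?_
      refine (hptw f).trans ?_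
      rw [Finset.sum_mul]
      refine Finset.sum_le_sum fun k _ => ?_
      exact mul_le_mul_of_nonneg_left (hP_le _ _) (norm_nonneg _)
    · -- both p and q finite: genuine Hölder
      have hq0 : q ≠ 0 := by
        intro h
        rw [h] at hpq
        simp at hpq
      have hq_ne1top : (1 : ℝ≥0∞) / q ≠ ∞ := by
        rw [one_div, Ne, ENNReal.inv_eq_top]
        exact hq0
      have hp_ne1 : p ≠ 1 := by
        intro h
        rw [h, one_div_one] at hpq
        have h0 : 1 / q = 0 :=
          (ENNReal.add_right_inj (by simp : (1:ℝ≥0∞) ≠ ∞)).1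
            (by rw [add_zero]; exact hpq)
        rw [one_div, ENNReal.inv_eq_zero] at h0
        exact hq h0
      have hp_lt : 1 < p := lt_of_le_of_ne hp1 (Ne.symm hp_ne1)
      have hpr1 : 1 < p.toReal := by
        rw [← ENNReal.toReal_one]
        exact (ENNReal.toReal_lt_toReal (by simp) hptop).2 hp_lt
      have hpr0 : p.toReal ≠ 0 := by positivity
      have hinv : 1 / p.toReal + 1 / q.toReal = 1 := by
        have h := congrArg ENNReal.toReal hpq
        rw [ENNReal.toReal_add (by simp [ENNReal.div_eq_top, hp0]) hq_ne1top,
          ENNReal.toReal_div, ENNReal.toReal_div] at h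
        simpa using h
      have hconj : Real.HolderConjugate p.toReal q.toReal :=
        Real.holderConjugate_iff.2 ⟨hpr1, by rw [← one_div, ← one_div]; exact hinv⟩
      have hB0 : (0:ℝ) ≤ (∑ k, ‖a k‖ ^ q.toReal) ^ (1 / q.toReal) :=
        Real.rpow_nonneg
          (Finset.sum_nonneg fun k _ => Real.rpow_nonneg (norm_nonneg _) _) _
      refine ContinuousLinearMap.opNorm_le_bound _ hB0 fun f => ?_
      refine (hptw f).trans ?_
      calc ∑ k, ‖a k‖ * ‖P (A k) f‖
          ≤ (∑ k, ‖a k‖ ^ q.toReal) ^ (1 / q.toReal) *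
            (∑ k, ‖P (A k) f‖ ^ p.toReal) ^ (1 / p.toReal) :=
            Real.inner_le_Lp_mul_Lq_of_nonneg Finset.univ hconj.symm
              (fun k _ => norm_nonneg _) (fun k _ => norm_nonneg _)
        _ ≤ (∑ k, ‖a k‖ ^ q.toReal) ^ (1 / q.toReal) * (‖f‖ ^ p.toReal) ^ (1 / p.toReal) := by
            refine mul_le_mul_of_nonneg_left ?_ hB0
            exact Real.rpow_le_rpow
              (Finset.sum_nonneg fun k _ => Real.rpow_nonneg (norm_nonneg _) _)
              (hkey hptop f) (by positivity)
        _ = (∑ k, ‖a k‖ ^ q.toReal) ^ (1 / q.toReal) * ‖f‖ := by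
            rw [← Real.rpow_mul (norm_nonneg f), mul_one_div, div_self hpr0,
              Real.rpow_one]
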